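/- arXiv:1412.2044 — 4 statements merged into one kernel-verified Lean document; each statement's English description precedes it below -/
import Mathlib

section
/- Let Y_1,...,Y_n be real numbers with n ≥ 2 and not all equal. Then the integral over θ ∈ ℝ and σ ∈ (0,∞) of σ^{-(n+1)} exp{−Σ_i (Y_i−θ)/σ} · exp{−Σ_i e^{−(Y_i−θ)/σ}} dθ dσ is finite. (Propriety of the posterior for the Gumbel(θ,σ) model under the improper prior π(θ,σ) = 1/σ.) -/
open MeasureTheory Real Set Finset

open scoped Nat

lemma integral_exp_neg_mul_Ioi {b : ℝ} (hb : 0 < b) (c : ℝ) :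
    ∫ x in Ioi c, Real.exp (-(b * x)) = Real.exp (-(b * c)) / b := by
  have := integral_Ioi_of_hasDerivAt_of_tendsto' (f := fun x => -(Real.exp (-(b * x)) / b))
    (f' := fun x => Real.exp (-(b * x))) (a := c) (m := 0)
    (fun x _ => by
      have h1 : HasDerivAt (fun x : ℝ => -(b * x)) (-b) x := by
        simpa using ((hasDerivAt_id x).const_mul b).fun_neg
      have := (((Real.hasDerivAt_exp (-(b * x))).comp x h1).div_const b).fun_neg
      convert this using 1
      · rfl
      · field_simp)
    (by simpa [neg_mul] using exp_neg_integrableOn_Ioi c hb) ?_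
  · simpa using this
  · have : Filter.Tendsto (fun x : ℝ => -(b * x)) Filter.atTop Filter.atBot := by
      simpa [neg_mul] using (Filter.tendsto_id (α := ℝ)).const_mul_atTop_of_neg
        (by linarith : -b < 0)
    simpa using (((Real.tendsto_exp_atBot.comp this).div_const b).neg)

lemma exp_neg_le_factorial_div (k : ℕ) {x : ℝ} (hx : 0 < x) :
    Real.exp (-x) ≤ k ! / x ^ k := by
  have h1 : x ^ k / k ! ≤ Real.exp x := by
    calc x ^ k / k ! ≤ ∑ i ∈ range (k+1), x ^ i / i ! := by
          exact Finset.single_le_sum (f := fun i => x ^ i / i !)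
            (fun i _ => by positivity) (self_mem_range_succ k)
      _ ≤ Real.exp x := Real.sum_le_exp_of_nonneg hx.le _
  have hxk : (0:ℝ) < x ^ k := by positivity
  have hfk : (0:ℝ) < (k ! : ℝ) := by positivity
  rw [Real.exp_neg]
  rw [inv_le_iff_one_le_mul₀ (Real.exp_pos x), div_mul_eq_mul_div, le_div_iff₀ hxk, one_mul]
  calc x ^ k = (x ^ k / k !) * k ! := by field_simp
    _ ≤ Real.exp x * k ! := by gcongr
    _ = k ! * Real.exp x := by ring

/-- Workhorse: integrability and a bound for `∫ exp(kθ/s) exp(-A e^{θ/s}) dθ`. -/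
lemma slice_main {k : ℕ} (hk : 1 ≤ k) {s A : ℝ} (hs : 0 < s) (hA : 0 < A) :
    Integrable (fun θ : ℝ => Real.exp ((k:ℝ) * θ / s) * Real.exp (-(A * Real.exp (θ / s))))
        volume ∧
      ∫ θ : ℝ, Real.exp ((k:ℝ) * θ / s) * Real.exp (-(A * Real.exp (θ / s)))
        ≤ (1 + (k+1)!) * s * (A ^ k)⁻¹ := by
  set g : ℝ → ℝ := fun θ => Real.exp ((k:ℝ) * θ / s) * Real.exp (-(A * Real.exp (θ / s)))
    with hg
  have hkpos : (0:ℝ) < k := by exact_mod_cast hk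
  set θ0 : ℝ := -(s * Real.log A) with hθ0
  have hcont : Continuous g := by fun_prop
  have hgnn : ∀ θ, 0 ≤ g θ := fun θ => by positivity
  -- bound on Iic
  have hb1 : (0:ℝ) < (k:ℝ)/s := by positivity
  have bound1 : ∀ θ : ℝ, g θ ≤ Real.exp ((k:ℝ)/s * θ) := by
    intro θ
    have h2 : Real.exp (-(A * Real.exp (θ / s))) ≤ 1 := by
      exact Real.exp_le_one_iff.2 (neg_nonpos.2 (by positivity))
    calc g θ ≤ Real.exp ((k:ℝ) * θ / s) * 1 := by
          exact mul_le_mul_of_nonneg_left h2 (Real.exp_pos _).le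
      _ = Real.exp ((k:ℝ)/s * θ) := by rw [mul_one]; ring_nf
  have hIic : IntegrableOn g (Iic θ0) := by
    refine Integrable.mono' ((integrableOn_exp_mul_Iic hb1 θ0)) hcont.aestronglyMeasurable.restrict ?_
    filter_upwards with θ
    rw [Real.norm_of_nonneg (hgnn θ)]
    exact bound1 θ
  have hexpθ0 : Real.exp ((k:ℝ)/s * θ0) = (A ^ k)⁻¹ := by
    rw [hθ0]
    have : (k:ℝ)/s * -(s * Real.log A) = -((k:ℝ) * Real.log A) := by field_simp
    rw [this, Real.exp_neg, Real.exp_nat_mul, Real.exp_log hA]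
  have hIic_val : ∫ θ in Iic θ0, g θ ≤ s * (A ^ k)⁻¹ := by
    calc ∫ θ in Iic θ0, g θ ≤ ∫ θ in Iic θ0, Real.exp ((k:ℝ)/s * θ) :=
          setIntegral_mono_on hIic (integrableOn_exp_mul_Iic hb1 θ0) measurableSet_Iic
            (fun θ _ => bound1 θ)
      _ = Real.exp ((k:ℝ)/s * θ0) / ((k:ℝ)/s) := integral_exp_mul_Iic hb1 θ0
      _ = (A ^ k)⁻¹ * (s / k) := by rw [hexpθ0]; field_simp
      _ ≤ s * (A ^ k)⁻¹ := by
          rw [mul_comm]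
          gcongr
          calc s / k ≤ s / 1 := by gcongr; exact_mod_cast hk
            _ = s := div_one s
  -- bound on Ioi
  set C2 : ℝ := (k+1)! * (A ^ (k+1))⁻¹ with hC2
  have bound2 : ∀ θ : ℝ, g θ ≤ C2 * Real.exp (-(1/s * θ)) := by
    intro θ
    have hpos : (0:ℝ) < A * Real.exp (θ / s) := by positivity
    have h2 := exp_neg_le_factorial_div (k+1) hpos
    have key : Real.exp ((k:ℝ) * θ / s) * (((k+1)! : ℝ) / (A * Real.exp (θ / s)) ^ (k+1))
        = C2 * Real.exp (-(1/s * θ)) := by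
      have e1 : Real.exp (θ/s) ^ (k+1) = Real.exp (((k:ℝ)+1) * (θ/s)) := by
        rw [← Real.exp_nat_mul]; norm_num
      have e2 : Real.exp ((k:ℝ)*θ/s) / Real.exp (((k:ℝ)+1)*(θ/s)) = Real.exp (-(1/s*θ)) := by
        rw [← Real.exp_sub]; congr 1; field_simp; ring
      rw [mul_pow, e1, hC2, ← e2]
      rw [div_eq_mul_inv, div_eq_mul_inv, mul_inv]
      ring
    calc g θ ≤ Real.exp ((k:ℝ) * θ / s) * (((k+1)! : ℝ) / (A * Real.exp (θ / s)) ^ (k+1)) := by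
          exact mul_le_mul_of_nonneg_left h2 (Real.exp_pos _).le
      _ = C2 * Real.exp (-(1/s * θ)) := key
  have h0 : IntegrableOn (fun θ : ℝ => Real.exp (-(1/s * θ))) (Ioi θ0) := by
    have := exp_neg_integrableOn_Ioi θ0 (show (0:ℝ) < 1/s by positivity)
    simpa [neg_mul] using this
  have hintIoi : IntegrableOn (fun θ : ℝ => C2 * Real.exp (-(1/s * θ))) (Ioi θ0) :=
    h0.const_mul C2
  have hIoi : IntegrableOn g (Ioi θ0) := by
    refine Integrable.mono' hintIoi hcont.aestronglyMeasurable.restrict ?_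
    filter_upwards with θ
    rw [Real.norm_of_nonneg (hgnn θ)]
    exact bound2 θ
  have hexpθ0' : Real.exp (-(1/s * θ0)) = A := by
    rw [hθ0]
    have : -(1/s * -(s * Real.log A)) = Real.log A := by field_simp
    rw [this, Real.exp_log hA]
  have hIoi_val : ∫ θ in Ioi θ0, g θ ≤ ((k+1)! : ℝ) * s * (A ^ k)⁻¹ := by
    calc ∫ θ in Ioi θ0, g θ ≤ ∫ θ in Ioi θ0, C2 * Real.exp (-(1/s * θ)) :=
          setIntegral_mono_on hIoi hintIoi measurableSet_Ioi (fun θ _ => bound2 θ)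
      _ = C2 * ∫ θ in Ioi θ0, Real.exp (-(1/s * θ)) := integral_const_mul _ _
      _ = C2 * (Real.exp (-(1/s * θ0)) / (1/s)) := by rw [integral_exp_neg_mul_Ioi (by positivity) θ0]
      _ = C2 * (A * s) := by rw [hexpθ0']; field_simp
      _ = ((k+1)! : ℝ) * s * (A ^ k)⁻¹ := by
          rw [hC2, pow_succ]
          field_simp
  have hint : Integrable g volume := by
    rw [← integrableOn_univ, ← Iic_union_Ioi (a := θ0)]
    exact hIic.union hIoi
  refine ⟨hint, ?_⟩
  calc ∫ θ, g θ = (∫ θ in Iic θ0, g θ) + ∫ θ in Ioi θ0, g θ :=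
        (intervalIntegral.integral_Iic_add_Ioi hIic hIoi).symm
    _ ≤ s * (A ^ k)⁻¹ + ((k+1)! : ℝ) * s * (A ^ k)⁻¹ := add_le_add hIic_val hIoi_val
    _ = (1 + (k+1)!) * s * (A ^ k)⁻¹ := by push_cast; ring

lemma continuousAt_sum' {ι : Type*} (s : Finset ι) {X : Type*} [TopologicalSpace X]
    {f : ι → X → ℝ} {x : X} (h : ∀ i ∈ s, ContinuousAt (f i) x) :
    ContinuousAt (fun y => ∑ i ∈ s, f i y) x := by
  classical
  induction s using Finset.induction_on with
  | empty => simpa using continuousAt_const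
  | @insert a s ha ih =>
    simp only [Finset.sum_insert ha]
    exact (h a (Finset.mem_insert_self a s)).add (ih fun i hi => h i (Finset.mem_insert_of_mem hi))

lemma outer_integrable {n : ℕ} (hn : 2 ≤ n) {c : ℝ} (hc : 0 < c) :
    IntegrableOn (fun σ : ℝ => σ ^ (-(n:ℝ)) * Real.exp (-(c/σ))) (Set.Ioi 0) := by
  have hGcont : ContinuousOn (fun σ : ℝ => σ ^ (-(n:ℝ)) * Real.exp (-(c/σ))) (Set.Ioi 0) := by
    intro σ hσ
    have hσ0 : σ ≠ 0 := (ne_of_gt hσ)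
    apply ContinuousAt.continuousWithinAt
    exact (Real.continuousAt_rpow_const σ _ (Or.inl hσ0)).mul
      ((Real.continuous_exp.continuousAt).comp
        ((continuousAt_const.div continuousAt_id hσ0).neg))
  have hGaesm : AEStronglyMeasurable (fun σ : ℝ => σ ^ (-(n:ℝ)) * Real.exp (-(c/σ))) (volume.restrict (Set.Ioi 0)) := hGcont.aestronglyMeasurable measurableSet_Ioi
  rw [show Set.Ioi (0:ℝ) = Set.Ioc 0 1 ∪ Set.Ioi 1 from (Set.Ioc_union_Ioi_eq_Ioi zero_le_one).symm]
  apply IntegrableOn.union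
  · -- on (0,1]: bounded by n!/c^n
    refine Integrable.mono' (g := fun _ : ℝ => (n ! : ℝ) / c ^ n)
      (integrableOn_const measure_Ioc_lt_top.ne)
      (hGaesm.mono_set Set.Ioc_subset_Ioi_self) ?_
    rw [ae_restrict_iff' measurableSet_Ioc]
    filter_upwards with σ hσ
    obtain ⟨hσ0, hσ1⟩ := hσ
    have hσp : (0:ℝ) < σ := hσ0
    have hnn : 0 ≤ σ ^ (-(n:ℝ)) * Real.exp (-(c/σ)) := by positivity
    rw [Real.norm_of_nonneg hnn]
    have h1 : σ ^ (-(n:ℝ)) = (σ ^ n)⁻¹ := by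
      rw [Real.rpow_neg hσp.le, Real.rpow_natCast]
    have h2 : Real.exp (-(c/σ)) ≤ (n ! : ℝ) / (c/σ) ^ n :=
      exp_neg_le_factorial_div n (by positivity)
    have h3 : ((n !:ℝ) / (c/σ) ^ n) = (n ! : ℝ) * σ ^ n / c ^ n := by
      rw [div_pow]; field_simp
    calc σ ^ (-(n:ℝ)) * Real.exp (-(c/σ)) ≤ (σ ^ n)⁻¹ * ((n ! : ℝ) * σ ^ n / c ^ n) := by
          rw [h1]; rw [h3] at h2
          exact mul_le_mul_of_nonneg_left h2 (by positivity)
      _ = (n ! : ℝ) / c ^ n := by field_simp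
  · -- on (1,∞): bounded by σ^(-n)
    refine Integrable.mono' (g := fun σ : ℝ => σ ^ (-(n:ℝ)))
      (integrableOn_Ioi_rpow_of_lt (by
        have : (2:ℝ) ≤ n := by exact_mod_cast hn
        linarith) one_pos)
      (hGaesm.mono_set (Set.Ioi_subset_Ioi zero_le_one)) ?_
    rw [ae_restrict_iff' measurableSet_Ioi]
    filter_upwards with σ hσ
    have hσp : (0:ℝ) < σ := lt_trans one_pos hσ
    have hnn : 0 ≤ σ ^ (-(n:ℝ)) * Real.exp (-(c/σ)) := by positivity
    rw [Real.norm_of_nonneg hnn]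
    have : Real.exp (-(c/σ)) ≤ 1 := Real.exp_le_one_iff.2 (neg_nonpos.2 (by positivity))
    calc σ ^ (-(n:ℝ)) * Real.exp (-(c/σ)) ≤ σ ^ (-(n:ℝ)) * 1 :=
          mul_le_mul_of_nonneg_left this (by positivity)
      _ = σ ^ (-(n:ℝ)) := mul_one _

/-- Propriety of the posterior for the Gumbel `(θ,σ)` model under the improper
prior `π(θ,σ) = 1/σ`: if `n ≥ 2` and the observations are not all equal, then
`∫∫ σ^{-(n+1)} exp{−Σ (Yᵢ−θ)/σ} exp{−Σ e^{−(Yᵢ−θ)/σ}} dθ dσ < ∞`. -/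
theorem stmt_4 (n : ℕ) (hn : 2 ≤ n) (Y : Fin n → ℝ)
    (hY : ∃ i j, Y i ≠ Y j) :
    IntegrableOn
      (fun p : ℝ × ℝ =>
        p.2 ^ (-((n : ℝ) + 1))
          * Real.exp (-∑ i, (Y i - p.1) / p.2)
          * Real.exp (-∑ i, Real.exp (-(Y i - p.1) / p.2)))
      (Set.univ ×ˢ Ioi (0 : ℝ)) volume := by
  have hne : Nonempty (Fin n) := Fin.pos_iff_nonempty.mp (by omega)
  set F : ℝ × ℝ → ℝ := fun p =>
    p.2 ^ (-((n : ℝ) + 1)) * Real.exp (-∑ i, (Y i - p.1) / p.2)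
      * Real.exp (-∑ i, Real.exp (-(Y i - p.1) / p.2)) with hF
  set S : ℝ := ∑ i, Y i with hS
  obtain ⟨i₀, -, hmin⟩ := Finset.exists_min_image Finset.univ Y
    ⟨Classical.arbitrary _, Finset.mem_univ _⟩
  set m : ℝ := Y i₀ with hm
  have hmle : ∀ i, m ≤ Y i := fun i => hmin i (Finset.mem_univ i)
  set c : ℝ := S - n * m with hc_def
  have hc : 0 < c := by
    obtain ⟨i, j, hij⟩ := hY
    have hsum : ∑ _i : Fin n, m < ∑ i, Y i := by
      refine Finset.sum_lt_sum (fun i _ => hmle i) ?_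
      by_cases h : m < Y i
      · exact ⟨i, Finset.mem_univ i, h⟩
      · have hYi : Y i = m := le_antisymm (not_lt.mp h) (hmle i)
        refine ⟨j, Finset.mem_univ j, ?_⟩
        rcases (hmle j).lt_or_eq with h' | h'
        · exact h'
        · exact absurd (by rw [hYi, ← h']) hij
    rw [Finset.sum_const, Finset.card_univ, Fintype.card_fin, nsmul_eq_mul, ← hS] at hsum
    rw [hc_def]
    linarith
  -- key rewriting of slices
  have key : ∀ σ : ℝ, (fun θ : ℝ => F (θ, σ)) = fun θ =>
      (σ ^ (-((n:ℝ)+1)) * Real.exp (-(S/σ))) *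
        (Real.exp ((n:ℝ) * θ / σ) *
          Real.exp (-((∑ i, Real.exp (-Y i / σ)) * Real.exp (θ / σ)))) := by
    intro σ
    funext θ
    simp only [hF]
    have h1 : -∑ i, (Y i - θ)/σ = -(S/σ) + (n:ℝ) * θ / σ := by
      rw [← Finset.sum_div, Finset.sum_sub_distrib, Finset.sum_const, Finset.card_univ,
        Fintype.card_fin, nsmul_eq_mul, ← hS]
      ring
    have h2 : ∑ i, Real.exp (-(Y i - θ)/σ)
        = (∑ i, Real.exp (-Y i / σ)) * Real.exp (θ/σ) := by
      rw [Finset.sum_mul]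
      refine Finset.sum_congr rfl fun i _ => ?_
      rw [← Real.exp_add]
      congr 1
      ring
    rw [h1, h2, Real.exp_add]
    ring
  -- continuity on the domain
  have hFcont : ContinuousOn F (Set.univ ×ˢ Set.Ioi (0:ℝ)) := by
    intro p hp
    have hp2 : (0:ℝ) < p.2 := hp.2
    apply ContinuousAt.continuousWithinAt
    have hc1 : ContinuousAt (fun q : ℝ × ℝ => q.2 ^ (-((n:ℝ)+1))) p :=
      ContinuousAt.comp (Real.continuousAt_rpow_const p.2 _ (Or.inl hp2.ne'))
        continuous_snd.continuousAt
    have hc2 : ContinuousAt (fun q : ℝ × ℝ => Real.exp (-∑ i, (Y i - q.1) / q.2)) p := by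
      apply Real.continuous_exp.continuousAt.comp
      apply ContinuousAt.neg
      exact continuousAt_sum' _ fun i _ =>
        (continuousAt_const.sub continuousAt_fst).div continuousAt_snd hp2.ne'
    have hc3 : ContinuousAt
        (fun q : ℝ × ℝ => Real.exp (-∑ i, Real.exp (-(Y i - q.1) / q.2))) p := by
      apply Real.continuous_exp.continuousAt.comp
      apply ContinuousAt.neg
      exact continuousAt_sum' _ fun i _ =>
        Real.continuous_exp.continuousAt.comp
          (((continuousAt_const.sub continuousAt_fst).neg).div continuousAt_snd hp2.ne')
    exact (hc1.mul hc2).mul hc3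
  have hF_aesm : AEStronglyMeasurable F
      ((volume : Measure ℝ).prod (volume.restrict (Set.Ioi 0))) := by
    have h1 : AEStronglyMeasurable F
        (((volume : Measure ℝ).prod volume).restrict (Set.univ ×ˢ Set.Ioi 0)) :=
      hFcont.aestronglyMeasurable (MeasurableSet.univ.prod measurableSet_Ioi)
    rwa [← Measure.prod_restrict, Measure.restrict_univ] at h1
  rw [IntegrableOn, Measure.volume_eq_prod, ← Measure.prod_restrict, Measure.restrict_univ]
  refine (integrable_prod_iff' hF_aesm).2 ⟨?_, ?_⟩
  · -- slices are integrable
    rw [ae_restrict_iff' measurableSet_Ioi]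
    filter_upwards with σ hσ
    have hA : 0 < ∑ i, Real.exp (-Y i / σ) :=
      Finset.sum_pos (fun i _ => Real.exp_pos _) Finset.univ_nonempty
    rw [key σ]
    exact ((slice_main (by omega : 1 ≤ n) hσ hA).1).const_mul _
  · -- the integrated slices are integrable in σ
    refine Integrable.mono'
      (g := fun σ : ℝ => ((1 + (n+1)! : ℕ) : ℝ) * (σ ^ (-(n:ℝ)) * Real.exp (-(c/σ))))
      ((outer_integrable hn hc).const_mul _) ?_ ?_
    · exact (hF_aesm.norm.prod_swap).integral_prod_right'
    · rw [ae_restrict_iff' measurableSet_Ioi]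
      filter_upwards with σ hσ
      have hA : 0 < ∑ i, Real.exp (-Y i / σ) :=
        Finset.sum_pos (fun i _ => Real.exp_pos _) Finset.univ_nonempty
      obtain ⟨hint, hbound⟩ := slice_main (by omega : 1 ≤ n) hσ hA
      have hFnn : ∀ θ, 0 ≤ F (θ, σ) := by
        intro θ
        rw [hF]
        exact mul_nonneg (mul_nonneg (Real.rpow_nonneg hσ.le _) (Real.exp_pos _).le)
          (Real.exp_pos _).le
      have e1 : (fun θ : ℝ => ‖F (θ, σ)‖) = fun θ => F (θ, σ) :=
        funext fun θ => Real.norm_of_nonneg (hFnn θ)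
      have e2 : ∫ θ, F (θ, σ)
          = (σ ^ (-((n:ℝ)+1)) * Real.exp (-(S/σ))) *
            ∫ θ, Real.exp ((n:ℝ) * θ / σ) *
              Real.exp (-((∑ i, Real.exp (-Y i / σ)) * Real.exp (θ / σ))) := by
        rw [key σ]
        exact integral_const_mul _ _
      rw [e1, Real.norm_of_nonneg (integral_nonneg hFnn), e2]
      have hC0 : 0 ≤ σ ^ (-((n:ℝ)+1)) * Real.exp (-(S/σ)) :=
        mul_nonneg (Real.rpow_nonneg (le_of_lt hσ) _) (Real.exp_pos _).le
      have hσpow : σ ^ (-((n:ℝ)+1)) * σ = σ ^ (-(n:ℝ)) := by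
        calc σ ^ (-((n:ℝ)+1)) * σ = σ ^ (-((n:ℝ)+1)) * σ ^ (1:ℝ) := by rw [Real.rpow_one]
          _ = σ ^ (-((n:ℝ)+1) + 1) := (Real.rpow_add hσ _ _).symm
          _ = σ ^ (-(n:ℝ)) := by norm_num
      have hAbound : ((∑ i, Real.exp (-Y i / σ)) ^ n)⁻¹ ≤ Real.exp ((n:ℝ) * m / σ) := by
        have hA1 : Real.exp (-m / σ) ≤ ∑ i, Real.exp (-Y i / σ) := by
          calc Real.exp (-m / σ) = Real.exp (-Y i₀ / σ) := by rw [hm]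
            _ ≤ ∑ i, Real.exp (-Y i / σ) :=
              Finset.single_le_sum (f := fun i => Real.exp (-Y i / σ))
                (fun i _ => (Real.exp_pos _).le) (Finset.mem_univ i₀)
        have hpowle : Real.exp (-m / σ) ^ n ≤ (∑ i, Real.exp (-Y i / σ)) ^ n :=
          pow_le_pow_left₀ (Real.exp_pos _).le hA1 n
        calc ((∑ i, Real.exp (-Y i / σ)) ^ n)⁻¹ ≤ (Real.exp (-m / σ) ^ n)⁻¹ :=
              inv_anti₀ (by positivity) hpowle
          _ = Real.exp ((n:ℝ) * m / σ) := by
              rw [← Real.exp_nat_mul, ← Real.exp_neg]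
              congr 1
              ring
      have hE : Real.exp (-(S/σ)) * ((∑ i, Real.exp (-Y i / σ)) ^ n)⁻¹
          ≤ Real.exp (-(c/σ)) := by
        calc Real.exp (-(S/σ)) * ((∑ i, Real.exp (-Y i / σ)) ^ n)⁻¹
            ≤ Real.exp (-(S/σ)) * Real.exp ((n:ℝ) * m / σ) :=
              mul_le_mul_of_nonneg_left hAbound (Real.exp_pos _).le
          _ = Real.exp (-(S/σ) + (n:ℝ) * m / σ) := (Real.exp_add _ _).symm
          _ = Real.exp (-(c/σ)) := by
              congr 1
              rw [hc_def]
              ring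
      calc (σ ^ (-((n:ℝ)+1)) * Real.exp (-(S/σ))) *
            ∫ θ, Real.exp ((n:ℝ) * θ / σ) *
              Real.exp (-((∑ i, Real.exp (-Y i / σ)) * Real.exp (θ / σ)))
          ≤ (σ ^ (-((n:ℝ)+1)) * Real.exp (-(S/σ))) *
            (((1 + (n+1)! : ℕ) : ℝ) * σ * (((∑ i, Real.exp (-Y i / σ)) ^ n)⁻¹)) := by
            refine mul_le_mul_of_nonneg_left ?_ hC0
            convert hbound using 2
            · rfl
            · push_cast
              ring
        _ = ((1 + (n+1)! : ℕ) : ℝ) * ((σ ^ (-((n:ℝ)+1)) * σ) *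
              (Real.exp (-(S/σ)) * ((∑ i, Real.exp (-Y i / σ)) ^ n)⁻¹)) := by ring
        _ ≤ ((1 + (n+1)! : ℕ) : ℝ) * ((σ ^ (-((n:ℝ)+1)) * σ) * Real.exp (-(c/σ))) := by
            have h00 : 0 ≤ σ ^ (-((n:ℝ)+1)) * σ :=
              mul_nonneg (Real.rpow_nonneg (le_of_lt hσ) _) (le_of_lt hσ)
            refine mul_le_mul_of_nonneg_left
              (mul_le_mul_of_nonneg_left hE h00) (by positivity)
        _ = ((1 + (n+1)! : ℕ) : ℝ) * (σ ^ (-(n:ℝ)) * Real.exp (-(c/σ))) := by rw [hσpow]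
end

section
/- Let Y_1,...,Y_n be real numbers with n ≥ 2 and min_i(Y_i − Ȳ_n) < 0. Then the integral over θ ∈ ℝ and σ ∈ (0,∞) of σ^{-(n+1)} Π_{i=1}^n [e^{−(Y_i−θ)/σ} / (1 + e^{−(Y_i−θ)/σ})²] dθ dσ is finite. (Propriety of the posterior for the Logistic(θ,σ) model under the improper prior π(θ,σ) = 1/σ.) -/
open MeasureTheory Real Set Finset

lemma integrable_exp_neg_mul_abs' {b : ℝ} (hb : 0 < b) :
    Integrable (fun x : ℝ => exp (-(b * |x|))) := by
  have h1 : IntegrableOn (fun x : ℝ => exp (-(b * |x|))) (Ioi 0) := by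
    refine ((exp_neg_integrableOn_Ioi 0 hb).congr_fun (fun x hx => ?_) measurableSet_Ioi)
    simp only [abs_of_pos (show (0:ℝ) < x from hx), neg_mul]
  have h2 : IntegrableOn (fun x : ℝ => exp (-(b * |x|))) (Iic 0) := by
    rw [← Measure.map_neg_eq_self (volume : Measure ℝ)]
    have m : MeasurableEmbedding fun x : ℝ => -x := (Homeomorph.neg ℝ).measurableEmbedding
    rw [m.integrableOn_map_iff]
    simp_rw [Function.comp_def, abs_neg, neg_preimage, neg_Iic, neg_zero]
    exact Iff.mpr integrableOn_Ici_iff_integrableOn_Ioi h1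
  rw [← integrableOn_univ, ← Iic_union_Ioi (a := (0:ℝ))]
  exact h2.union h1

lemma integral_exp_neg_mul_abs' {b : ℝ} (hb : 0 < b) :
    ∫ x : ℝ, exp (-(b * |x|)) = b⁻¹ * ∫ x : ℝ, exp (-|x|) := by
  have h := MeasureTheory.Measure.integral_comp_mul_left (fun u : ℝ => exp (-|u|)) b
  simp only [abs_mul, abs_of_pos hb, smul_eq_mul, abs_inv] at h
  exact h

lemma M_integrable (n : ℕ) (hn : 2 ≤ n) (c d : ℝ) (hd : 0 < d) :
    IntegrableOn (fun p : ℝ × ℝ =>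
      p.2 ^ (-((n:ℝ)+1)) * (exp (-(d / (2 * p.2))) * exp (-(1/(2*p.2) * |p.1 - c|))))
      (Set.univ ×ˢ Set.Ioi 0) volume := by
  have hMmeas : Measurable (fun p : ℝ × ℝ =>
      p.2 ^ (-((n:ℝ)+1)) * (exp (-(d / (2 * p.2))) * exp (-(1/(2*p.2) * |p.1 - c|)))) := by
    fun_prop
  rw [IntegrableOn, Measure.volume_eq_prod, ← Measure.prod_restrict, Measure.restrict_univ]
  rw [integrable_prod_iff' hMmeas.aestronglyMeasurable]
  set E₀ : ℝ := ∫ x : ℝ, exp (-|x|) with hE₀def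
  have hE₀ : 0 ≤ E₀ := integral_nonneg (fun x => (exp_nonneg _))
  constructor
  · filter_upwards [ae_restrict_mem measurableSet_Ioi] with σ hσ
    have hσ0 : (0:ℝ) < σ := hσ
    have hb : (0:ℝ) < 1/(2*σ) := by positivity
    have base := (integrable_exp_neg_mul_abs' hb).comp_sub_right c
    exact (base.const_mul (σ ^ (-((n:ℝ)+1)) * exp (-(d / (2 * σ))))).congr
      (Filter.Eventually.of_forall (fun θ => by ring))
  · -- explicit value then integrability on Ioi 0
    have hval : ∀ σ ∈ Set.Ioi (0:ℝ),
        (∫ θ : ℝ, ‖σ ^ (-((n:ℝ)+1)) * (exp (-(d / (2 * σ))) * exp (-(1/(2*σ) * |θ - c|)))‖)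
          = σ ^ (-((n:ℝ)+1)) * exp (-(d / (2 * σ))) * (2 * σ * E₀) := by
      intro σ hσ
      have hσ0 : (0:ℝ) < σ := hσ
      have hb : (0:ℝ) < 1/(2*σ) := by positivity
      have h1 : ∀ θ : ℝ, ‖σ ^ (-((n:ℝ)+1)) * (exp (-(d / (2 * σ))) * exp (-(1/(2*σ) * |θ - c|)))‖
          = (σ ^ (-((n:ℝ)+1)) * exp (-(d / (2 * σ)))) * exp (-(1/(2*σ) * |θ - c|)) := by
        intro θ
        rw [Real.norm_eq_abs, abs_of_nonneg (by positivity), mul_assoc]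
      simp_rw [h1]
      rw [integral_const_mul]
      have h2 : (∫ θ : ℝ, exp (-(1/(2*σ) * |θ - c|)))
          = ∫ x : ℝ, exp (-(1/(2*σ) * |x|)) :=
        integral_sub_right_eq_self (fun x => exp (-(1/(2*σ) * |x|))) c
      rw [h2, integral_exp_neg_mul_abs' hb]
      have : (1/(2*σ))⁻¹ = 2 * σ := by field_simp
      rw [this]
    set G : ℝ → ℝ := fun σ => σ ^ (-((n:ℝ)+1)) * exp (-(d / (2 * σ))) * (2 * σ * E₀) with hGdef
    have hGmeas : Measurable G := by fun_prop
    have hG : IntegrableOn G (Set.Ioi 0) := by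
      have hsplit : Set.Ioi (0:ℝ) = Set.Ioc 0 1 ∪ Set.Ioi 1 := (Ioc_union_Ioi_eq_Ioi zero_le_one).symm
      rw [hsplit]
      refine IntegrableOn.union ?_ ?_
      · -- bounded by constant on Ioc 0 1
        set K : ℝ := (n.factorial : ℝ) * (2/d)^n * (2 * E₀) with hKdef
        refine Integrable.mono' (g := fun _ => K) (integrableOn_const measure_Ioc_lt_top.ne)
          hGmeas.aestronglyMeasurable ?_
        filter_upwards [ae_restrict_mem measurableSet_Ioc] with σ hσ
        have hσ0 : (0:ℝ) < σ := hσ.1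
        have hGnn : 0 ≤ G σ := by
          have := Real.rpow_pos_of_pos hσ0 (-((n:ℝ)+1))
          positivity
        rw [Real.norm_eq_abs, abs_of_nonneg hGnn]
        -- exp bound : exp (-(d/(2σ))) ≤ n! * (2σ/d)^n
        have hx : (0:ℝ) < d/(2*σ) := by positivity
        have hsum := Real.sum_le_exp_of_nonneg hx.le (n+1)
        have hterm : (d/(2*σ))^n / (n.factorial : ℝ) ≤ exp (d/(2*σ)) := by
          refine le_trans ?_ hsum
          refine Finset.single_le_sum (f := fun i => (d/(2*σ))^i / (i.factorial : ℝ))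
            (fun i _ => by positivity) (Finset.self_mem_range_succ n)
        have hexp : exp (-(d/(2*σ))) ≤ (n.factorial : ℝ) * (2*σ/d)^n := by
          rw [exp_neg]
          rw [inv_le_comm₀ (exp_pos _) (by positivity)]
          calc ((n.factorial : ℝ) * (2*σ/d)^n)⁻¹
              = (d/(2*σ))^n / (n.factorial : ℝ) := by
                rw [mul_inv, ← inv_pow, inv_div]
                ring
            _ ≤ exp (d/(2*σ)) := hterm
        have hrpow : σ ^ (-((n:ℝ)+1)) = (σ ^ (n+1 : ℕ))⁻¹ := by
          rw [← Real.rpow_natCast σ (n+1), ← Real.rpow_neg hσ0.le]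
          push_cast; ring_nf
        calc G σ ≤ σ ^ (-((n:ℝ)+1)) * ((n.factorial : ℝ) * (2*σ/d)^n) * (2 * σ * E₀) := by
              have h0 : (0:ℝ) < σ ^ (-((n:ℝ)+1)) := Real.rpow_pos_of_pos hσ0 _
              apply mul_le_mul_of_nonneg_right (mul_le_mul_of_nonneg_left hexp h0.le)
              positivity
          _ = K := by
              rw [hrpow, hKdef]
              field_simp
              ring
      · -- on Ioi 1 bounded by (2*E₀) * σ^(-n)
        refine Integrable.mono'
          ((integrableOn_Ioi_rpow_of_lt (by
            have h2n : (2:ℝ) ≤ (n:ℝ) := by exact_mod_cast hn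
            linarith : -(n:ℝ) < -1) zero_lt_one).const_mul (2 * E₀))
          hGmeas.aestronglyMeasurable ?_
        filter_upwards [ae_restrict_mem measurableSet_Ioi] with σ hσ
        have hσ0 : (0:ℝ) < σ := lt_trans zero_lt_one hσ
        have hGnn : 0 ≤ G σ := by
          have := Real.rpow_pos_of_pos hσ0 (-((n:ℝ)+1))
          positivity
        rw [Real.norm_eq_abs, abs_of_nonneg hGnn]
        have hrw : σ ^ (-((n:ℝ)+1)) * σ = σ ^ (-(n:ℝ)) := by
          rw [← Real.rpow_add_one hσ0.ne' (-((n:ℝ)+1))]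
          norm_num
        have hexp1 : exp (-(d / (2 * σ))) ≤ 1 := exp_le_one_iff.mpr (neg_nonpos.mpr (by positivity))
        calc G σ = (σ ^ (-((n:ℝ)+1)) * σ) * exp (-(d / (2 * σ))) * (2 * E₀) := by ring
          _ ≤ (σ ^ (-((n:ℝ)+1)) * σ) * 1 * (2 * E₀) := by
              have h0 : (0:ℝ) < σ ^ (-((n:ℝ)+1)) := Real.rpow_pos_of_pos hσ0 _
              apply mul_le_mul_of_nonneg_right (mul_le_mul_of_nonneg_left hexp1 (by positivity))
              positivity
          _ = 2 * E₀ * σ ^ (-(n:ℝ)) := by rw [hrw]; ring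
    refine hG.congr ?_
    filter_upwards [ae_restrict_mem measurableSet_Ioi] with σ hσ
    exact (hval σ hσ).symm

lemma logistic_prod_bound (n : ℕ) (Y : Fin n → ℝ) (a b : Fin n) (hab : a ≠ b) (θ σ : ℝ)
    (hσ : 0 < σ) :
    (∏ i, Real.exp (-(Y i - θ) / σ) / (1 + Real.exp (-(Y i - θ) / σ)) ^ 2)
      ≤ Real.exp (-((Y b - Y a + |θ - Y a|) / (2 * σ))) := by
  have glb : ∀ x : ℝ, exp (-x) / (1 + exp (-x)) ^ 2 ≤ 1 := by
    intro x
    rw [div_le_one (by positivity)]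
    nlinarith [exp_pos (-x), sq_nonneg (exp (-x))]
  have gnn : ∀ x : ℝ, 0 ≤ exp (-x) / (1 + exp (-x)) ^ 2 := fun x => by positivity
  have gle : ∀ x : ℝ, exp (-x) / (1 + exp (-x)) ^ 2 ≤ exp (-|x|) := by
    intro x
    rcases le_or_gt 0 x with h | h
    · rw [abs_of_nonneg h]
      refine div_le_self (by positivity) ?_
      nlinarith [exp_pos (-x), sq_nonneg (exp (-x))]
    · rw [abs_of_neg h, neg_neg, div_le_iff₀ (by positivity)]
      have h1 : exp (-x) * exp x = 1 := by rw [← exp_add]; simp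
      nlinarith [exp_pos (-x), exp_pos x]
  simp_rw [neg_div]
  calc (∏ i, exp (-((Y i - θ) / σ)) / (1 + exp (-((Y i - θ) / σ))) ^ 2)
      = (∏ i ∈ univ \ {a, b}, exp (-((Y i - θ) / σ)) / (1 + exp (-((Y i - θ) / σ))) ^ 2)
        * ∏ i ∈ ({a, b} : Finset (Fin n)), exp (-((Y i - θ) / σ)) / (1 + exp (-((Y i - θ) / σ))) ^ 2 :=
      (Finset.prod_sdiff (Finset.subset_univ _)).symm
    _ ≤ 1 * ∏ i ∈ ({a, b} : Finset (Fin n)), exp (-((Y i - θ) / σ)) / (1 + exp (-((Y i - θ) / σ))) ^ 2 := by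
      refine mul_le_mul_of_nonneg_right ?_ (Finset.prod_nonneg fun i _ => gnn _)
      exact Finset.prod_le_one (fun i _ => gnn _) (fun i _ => glb _)
    _ = (exp (-((Y a - θ) / σ)) / (1 + exp (-((Y a - θ) / σ))) ^ 2)
        * (exp (-((Y b - θ) / σ)) / (1 + exp (-((Y b - θ) / σ))) ^ 2) := by
      rw [one_mul, Finset.prod_pair hab]
    _ ≤ exp (-|(Y a - θ) / σ|) * exp (-|(Y b - θ) / σ|) :=
      mul_le_mul (gle _) (gle _) (gnn _) (exp_nonneg _)
    _ = exp (-(|Y a - θ| / σ + |Y b - θ| / σ)) := by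
      rw [← exp_add, abs_div, abs_div, abs_of_pos hσ]; ring_nf
    _ ≤ exp (-((Y b - Y a + |θ - Y a|) / (2 * σ))) := by
      rw [exp_le_exp, neg_le_neg_iff]
      have e1 : |Y a - θ| / σ + |Y b - θ| / σ = 2 * (|Y a - θ| + |Y b - θ|) / (2 * σ) := by
        field_simp
      rw [e1, div_le_div_iff_of_pos_right (by positivity)]
      have h2 : Y b - Y a ≤ |Y a - θ| + |Y b - θ| := by
        have := abs_sub_le (Y b) θ (Y a)
        have := le_abs_self (Y b - Y a)
        linarith [abs_sub_comm (Y b) θ, abs_sub_comm θ (Y a)]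
      have h3 : |θ - Y a| ≤ |Y a - θ| + |Y b - θ| := by
        rw [abs_sub_comm]
        linarith [abs_nonneg (Y b - θ)]
      linarith [abs_nonneg (Y a - θ), abs_nonneg (Y b - θ)]

/-- Propriety of the posterior for the Logistic `(θ,σ)` model under the
improper prior `π(θ,σ) = 1/σ`: if `n ≥ 2` and `minᵢ(Yᵢ − Ȳ) < 0`, then
`∫∫ σ^{-(n+1)} Π e^{−(Yᵢ−θ)/σ}/(1+e^{−(Yᵢ−θ)/σ})² dθ dσ < ∞`. -/
theorem stmt_6 (n : ℕ) (hn : 2 ≤ n) (Y : Fin n → ℝ)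
    (hY : ∃ i, Y i - (∑ j, Y j) / n < 0) :
    IntegrableOn
      (fun p : ℝ × ℝ =>
        p.2 ^ (-((n : ℝ) + 1))
          * ∏ i, Real.exp (-(Y i - p.1) / p.2)
              / (1 + Real.exp (-(Y i - p.1) / p.2)) ^ 2)
      (Set.univ ×ˢ Ioi (0 : ℝ)) volume := by
  obtain ⟨a, ha⟩ := hY
  have hbex : ∃ b, (∑ j, Y j) / n ≤ Y b := by
    by_contra h
    push_neg at h
    have hne : (Finset.univ : Finset (Fin n)).Nonempty := ⟨a, Finset.mem_univ a⟩
    have hsum : ∑ j, Y j < ∑ _j : Fin n, (∑ j, Y j) / n :=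
      Finset.sum_lt_sum_of_nonempty hne (fun i _ => h i)
    rw [Finset.sum_const, Finset.card_univ, Fintype.card_fin, nsmul_eq_mul] at hsum
    have hn0 : (n : ℝ) ≠ 0 := by
      have : 0 < n := lt_of_lt_of_le (by norm_num) hn
      exact_mod_cast this.ne'
    rw [mul_div_cancel₀ _ hn0] at hsum
    exact lt_irrefl _ hsum
  obtain ⟨b, hb⟩ := hbex
  have hd : 0 < Y b - Y a := by linarith
  have hab : a ≠ b := by
    intro h
    rw [h] at hd
    linarith
  have hfmeas : Measurable (fun p : ℝ × ℝ =>
      p.2 ^ (-((n : ℝ) + 1))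
        * ∏ i, Real.exp (-(Y i - p.1) / p.2)
            / (1 + Real.exp (-(Y i - p.1) / p.2)) ^ 2) := by fun_prop
  refine (M_integrable n hn (Y a) (Y b - Y a) hd).mono'
    hfmeas.aestronglyMeasurable ?_
  filter_upwards [ae_restrict_mem (MeasurableSet.univ.prod measurableSet_Ioi)] with p hp
  have hσ : 0 < p.2 := hp.2
  have hprodnn : 0 ≤ ∏ i, Real.exp (-(Y i - p.1) / p.2)
      / (1 + Real.exp (-(Y i - p.1) / p.2)) ^ 2 :=
    Finset.prod_nonneg fun i _ => by positivity
  have hrnn : 0 ≤ p.2 ^ (-((n : ℝ) + 1)) := (Real.rpow_pos_of_pos hσ _).le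
  rw [Real.norm_eq_abs, abs_of_nonneg (mul_nonneg hrnn hprodnn)]
  have hkey := logistic_prod_bound n Y a b hab p.1 p.2 hσ
  have hsplit : Real.exp (-((Y b - Y a + |p.1 - Y a|) / (2 * p.2)))
      = exp (-((Y b - Y a) / (2 * p.2))) * exp (-(1 / (2 * p.2) * |p.1 - Y a|)) := by
    rw [← exp_add]
    congr 1
    field_simp
    ring
  calc p.2 ^ (-((n : ℝ) + 1))
        * ∏ i, Real.exp (-(Y i - p.1) / p.2) / (1 + Real.exp (-(Y i - p.1) / p.2)) ^ 2
      ≤ p.2 ^ (-((n : ℝ) + 1)) * Real.exp (-((Y b - Y a + |p.1 - Y a|) / (2 * p.2))) :=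
        mul_le_mul_of_nonneg_left hkey hrnn
    _ = p.2 ^ (-((n : ℝ) + 1)) * (exp (-((Y b - Y a) / (2 * p.2)))
          * exp (-(1 / (2 * p.2) * |p.1 - Y a|))) := by rw [hsplit]
end

section
/- Tail-mass bound in the embedded case: with prior density π_α(α) ∝ α^{a₁−1}(1−α)^{a₂−1} (Beta(a₁,a₂), a₂ < d₂) and absolutely continuous prior on (θ₁,ψ) ∈ ℝ^{d₁}×ℝ^{d₂} with bounded density near (θ₁*,0), the prior mass of the set {(α,θ₁,ψ) : ‖θ₁−θ₁*‖ ≤ δ_n, (1−α)‖ψ‖ ≤ δ_n, 1−α > z_n} is bounded up to a constant by δ_n^{d₁} ∫_{z_n}^1 (δ_n/u)^{d₂} u^{a₂−1} du ≤ C δ_n^{d₁+d₂} z_n^{a₂−d₂}/(d₂−a₂). -/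
open MeasureTheory Set
open scoped ENNReal

lemma aux_piece1 (a₁ : ℝ) (ha₁ : 0 < a₁) :
    ∫⁻ α in Ioo (0:ℝ) (1/2), ENNReal.ofReal (α ^ (a₁-1))
      ≤ ENNReal.ofReal ((1/2:ℝ) ^ a₁ / a₁) := by
  have hint : IntegrableOn (fun α : ℝ => α ^ (a₁-1)) (Ioo 0 (1/2)) := by
    have h := intervalIntegral.intervalIntegrable_rpow' (a := (0:ℝ)) (b := 1/2)
      (r := a₁ - 1) (by linarith)
    exact h.1.mono_set Ioo_subset_Ioc_self
  have hnn : 0 ≤ᵐ[volume.restrict (Ioo (0:ℝ) (1/2))] fun α : ℝ => α ^ (a₁-1) := by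
    filter_upwards [ae_restrict_mem measurableSet_Ioo] with x hx
    exact Real.rpow_nonneg hx.1.le _
  rw [← ofReal_integral_eq_lintegral_ofReal hint hnn]
  apply ENNReal.ofReal_le_ofReal
  have h1 : ∫ α in Ioo (0:ℝ) (1/2), α ^ (a₁-1) = ∫ α in (0:ℝ)..(1/2), α ^ (a₁-1) := by
    rw [intervalIntegral.integral_of_le (by norm_num : (0:ℝ) ≤ 1/2),
      MeasureTheory.integral_Ioc_eq_integral_Ioo]
  rw [h1, integral_rpow (Or.inl (by linarith))]
  rw [Real.zero_rpow (by linarith : a₁ - 1 + 1 ≠ 0)]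
  simp

lemma aux_piece2 (d₂ : ℕ) (a₂ z : ℝ) (ha₂ : 0 < a₂) (ha₂d : a₂ < d₂) (hz : 0 < z) (hz1 : z < 1) :
    ∫⁻ α in Ico (1/2:ℝ) (1-z), ENNReal.ofReal ((1-α) ^ (a₂-1-d₂))
      ≤ ENNReal.ofReal (z ^ (a₂ - d₂) / (d₂ - a₂)) := by
  have hda : (0:ℝ) < d₂ - a₂ := by linarith
  rcases lt_or_ge (1-z) (1/2:ℝ) with h | h
  · rw [Ico_eq_empty (by linarith)]
    simp
  · have hint : IntegrableOn (fun α : ℝ => (1-α) ^ (a₂-1-d₂)) (Ico (1/2:ℝ) (1-z)) := by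
      apply (ContinuousOn.integrableOn_compact isCompact_Icc ?_).mono_set Ico_subset_Icc_self
      intro x hx
      apply (Real.continuousAt_rpow_const _ _ (Or.inl ?_)).comp ((continuous_const.sub continuous_id).continuousAt) |>.continuousWithinAt
      simp only [ne_eq, id_eq, Pi.sub_apply]
      intro h0
      have := hx.2
      linarith
    have hnn : 0 ≤ᵐ[volume.restrict (Ico (1/2:ℝ) (1-z))] fun α : ℝ => (1-α) ^ (a₂-1-d₂) := by
      filter_upwards [ae_restrict_mem measurableSet_Ico] with x hx
      exact Real.rpow_nonneg (by linarith [hx.2]) _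
    rw [← ofReal_integral_eq_lintegral_ofReal hint hnn]
    apply ENNReal.ofReal_le_ofReal
    have h1 : ∫ α in Ico (1/2:ℝ) (1-z), (1-α) ^ (a₂-1-d₂)
        = ∫ α in (1/2:ℝ)..(1-z), (1-α) ^ (a₂-1-d₂) := by
      rw [intervalIntegral.integral_of_le h, ← MeasureTheory.integral_Icc_eq_integral_Ioc,
        ← MeasureTheory.integral_Icc_eq_integral_Ico]
    rw [h1]
    have h2 : (∫ α in (1/2:ℝ)..(1-z), (1-α) ^ (a₂-1-d₂))
        = ∫ u in z..(1/2:ℝ), u ^ (a₂-1-d₂) := by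
      have := intervalIntegral.integral_comp_sub_left (a := (1/2:ℝ)) (b := 1-z)
        (fun u : ℝ => u ^ (a₂-1-d₂)) 1
      simp only [show (1:ℝ)-(1-z) = z from by ring, show (1:ℝ)-1/2 = 1/2 from by norm_num] at this
      exact this
    rw [h2, integral_rpow (Or.inr ⟨by intro hc; nlinarith,
        notMem_uIcc_of_lt hz (by norm_num)⟩)]
    have he : a₂ - 1 - d₂ + 1 = a₂ - d₂ := by ring
    rw [he]
    have hzp : (0:ℝ) < z ^ (a₂ - d₂) := Real.rpow_pos_of_pos hz _
    have hhp : (0:ℝ) < (1/2:ℝ) ^ (a₂ - d₂) := Real.rpow_pos_of_pos (by norm_num) _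
    have key : ((1/2:ℝ)^(a₂-(d₂:ℝ)) - z^(a₂-(d₂:ℝ)))/(a₂-1-(d₂:ℝ)+1) = (z^(a₂-(d₂:ℝ)) - (1/2:ℝ)^(a₂-(d₂:ℝ)))/((d₂:ℝ)-a₂) := by
      rw [div_eq_div_iff (by linarith) (by linarith)]; ring
    rw [he] at key
    rw [key]
    gcongr
    linarith

lemma aux_alpha (d₂ : ℕ) (a₁ a₂ δ z : ℝ) (ha₁ : 0 < a₁) (ha₂ : 0 < a₂)
    (ha₂d : a₂ < d₂) (hδ : 0 < δ) (hz : 0 < z) (hz1 : z < 1) :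
    ∫⁻ α in Ioo (0:ℝ) (1-z),
        ENNReal.ofReal (α ^ (a₁-1) * (1-α) ^ (a₂-1) * (δ/(1-α)) ^ d₂)
      ≤ ENNReal.ofReal (δ ^ d₂ *
          (((1/2:ℝ) ^ (a₂-1-(d₂:ℝ)) * ((1/2:ℝ) ^ a₁ / a₁) * ((d₂:ℝ) - a₂)
            + max ((1/2:ℝ) ^ (a₁-1)) 1) * (z ^ (a₂ - (d₂:ℝ)) / ((d₂:ℝ) - a₂)))) := by
  have hda : (0:ℝ) < d₂ - a₂ := by linarith
  set c1 : ℝ := (1/2:ℝ) ^ (a₂-1-(d₂:ℝ)) with hc1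
  set c2 : ℝ := max ((1/2:ℝ) ^ (a₁-1)) 1 with hc2
  have hc1p : 0 < c1 := Real.rpow_pos_of_pos (by norm_num) _
  have hc2p : (0:ℝ) < c2 := lt_max_of_lt_right one_pos
  -- rewrite integrand on the set
  have step1 : ∫⁻ α in Ioo (0:ℝ) (1-z),
        ENNReal.ofReal (α ^ (a₁-1) * (1-α) ^ (a₂-1) * (δ/(1-α)) ^ d₂)
      = ∫⁻ α in Ioo (0:ℝ) (1-z),
        ENNReal.ofReal (δ ^ d₂) * ENNReal.ofReal (α ^ (a₁-1) * (1-α) ^ (a₂-1-(d₂:ℝ))) := by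
    apply setLIntegral_congr_fun measurableSet_Ioo
    intro α hα
    beta_reduce
    have hu : (0:ℝ) < 1 - α := by have := hα.2; linarith
    have hupow : (0:ℝ) < (1-α) ^ d₂ := pow_pos hu _
    rw [← ENNReal.ofReal_mul (by positivity)]
    congr 1
    have hr : (1-α) ^ (a₂-1-(d₂:ℝ)) = (1-α) ^ (a₂-1) / (1-α) ^ d₂ := by
      rw [Real.rpow_sub hu, Real.rpow_natCast]
    rw [hr, div_pow]
    field_simp
  rw [step1, lintegral_const_mul' _ _ ENNReal.ofReal_ne_top,
    ENNReal.ofReal_mul (by positivity : (0:ℝ) ≤ δ ^ d₂)]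
  apply mul_le_mul_right ?_ _
  -- split the domain
  have hsub : Ioo (0:ℝ) (1-z) ⊆ Ioo 0 (1/2) ∪ Ico (1/2) (1-z) := by
    intro x hx
    rcases lt_or_ge x (1/2) with h | h
    · exact Or.inl ⟨hx.1, h⟩
    · exact Or.inr ⟨h, hx.2⟩
  calc ∫⁻ α in Ioo (0:ℝ) (1-z), ENNReal.ofReal (α ^ (a₁-1) * (1-α) ^ (a₂-1-(d₂:ℝ)))
      ≤ ∫⁻ α in Ioo (0:ℝ) (1/2) ∪ Ico (1/2) (1-z),
          ENNReal.ofReal (α ^ (a₁-1) * (1-α) ^ (a₂-1-(d₂:ℝ))) :=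
        lintegral_mono_set hsub
    _ ≤ (∫⁻ α in Ioo (0:ℝ) (1/2), ENNReal.ofReal (α ^ (a₁-1) * (1-α) ^ (a₂-1-(d₂:ℝ))))
        + ∫⁻ α in Ico (1/2:ℝ) (1-z), ENNReal.ofReal (α ^ (a₁-1) * (1-α) ^ (a₂-1-(d₂:ℝ))) :=
        lintegral_union_le _ _ _
    _ ≤ (ENNReal.ofReal c1 * ∫⁻ α in Ioo (0:ℝ) (1/2), ENNReal.ofReal (α ^ (a₁-1)))
        + ENNReal.ofReal c2 * ∫⁻ α in Ico (1/2:ℝ) (1-z), ENNReal.ofReal ((1-α) ^ (a₂-1-(d₂:ℝ))) := by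
        gcongr ?_ + ?_
        · rw [← lintegral_const_mul' _ _ ENNReal.ofReal_ne_top]
          apply setLIntegral_mono' measurableSet_Ioo
          intro x hx
          rw [← ENNReal.ofReal_mul hc1p.le]
          apply ENNReal.ofReal_le_ofReal
          have hx0 : (0:ℝ) < x := hx.1
          have h2 : (1/2:ℝ) ≤ 1 - x := by have := hx.2; linarith
          have : (1-x) ^ (a₂-1-(d₂:ℝ)) ≤ c1 :=
            Real.rpow_le_rpow_of_nonpos (by norm_num) h2 (by push_cast; linarith)
          have hxnn : (0:ℝ) ≤ x ^ (a₁-1) := Real.rpow_nonneg hx0.le _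
          nlinarith [Real.rpow_nonneg (show (0:ℝ) ≤ 1-x by linarith) (a₂-1-(d₂:ℝ))]
        · rw [← lintegral_const_mul' _ _ ENNReal.ofReal_ne_top]
          apply setLIntegral_mono' measurableSet_Ico
          intro x hx
          rw [← ENNReal.ofReal_mul hc2p.le]
          apply ENNReal.ofReal_le_ofReal
          have hx0 : (0:ℝ) < x := lt_of_lt_of_le (by norm_num) hx.1
          have hx1 : x ≤ 1 := by have := hx.2; linarith
          have hxc : x ^ (a₁-1) ≤ c2 := by
            rcases le_total a₁ 1 with h | h
            · exact le_max_of_le_left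
                (Real.rpow_le_rpow_of_nonpos (by norm_num) hx.1 (by linarith))
            · exact le_max_of_le_right (Real.rpow_le_one hx0.le hx1 (by linarith))
          have := Real.rpow_nonneg (show (0:ℝ) ≤ 1-x by linarith) (a₂-1-(d₂:ℝ))
          nlinarith
    _ ≤ ENNReal.ofReal c1 * ENNReal.ofReal ((1/2:ℝ) ^ a₁ / a₁)
        + ENNReal.ofReal c2 * ENNReal.ofReal (z ^ (a₂ - (d₂:ℝ)) / ((d₂:ℝ) - a₂)) := by
        gcongr
        · exact aux_piece1 a₁ ha₁
        · exact aux_piece2 d₂ a₂ z ha₂ ha₂d hz hz1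
    _ ≤ ENNReal.ofReal ((c1 * ((1/2:ℝ) ^ a₁ / a₁) * ((d₂:ℝ) - a₂) + c2)
          * (z ^ (a₂ - (d₂:ℝ)) / ((d₂:ℝ) - a₂))) := by
        rw [← ENNReal.ofReal_mul hc1p.le, ← ENNReal.ofReal_mul hc2p.le,
          ← ENNReal.ofReal_add (by positivity) (by positivity)]
        apply ENNReal.ofReal_le_ofReal
        have hz1' : 1 ≤ z ^ (a₂ - (d₂:ℝ)) :=
          Real.one_le_rpow_of_pos_of_le_one_of_nonpos hz hz1.le (by linarith)
        have h1 : c1 * ((1/2:ℝ) ^ a₁ / a₁)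
            ≤ c1 * ((1/2:ℝ) ^ a₁ / a₁) * ((d₂:ℝ) - a₂) * (z ^ (a₂ - (d₂:ℝ)) / ((d₂:ℝ) - a₂)) := by
          have hb : (0:ℝ) < (1/2:ℝ) ^ a₁ / a₁ := by positivity
          have heq : c1 * ((1/2:ℝ) ^ a₁ / a₁) * ((d₂:ℝ) - a₂) * (z ^ (a₂ - (d₂:ℝ)) / ((d₂:ℝ) - a₂))
              = (c1 * ((1/2:ℝ) ^ a₁ / a₁)) * z ^ (a₂ - (d₂:ℝ)) := by
            field_simp
          rw [heq]
          nlinarith [mul_le_mul_of_nonneg_left hz1'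
            (show (0:ℝ) ≤ c1 * ((1/2:ℝ) ^ a₁ / a₁) by positivity)]
        nlinarith [mul_le_mul_of_nonneg_left hz1' (le_of_lt hc2p)]



/-- Tail-mass bound in the embedded case: with a `Beta(a₁,a₂)` prior density
on the weight (`a₂ < d₂`) and a bounded prior density `p` on
`(θ₁,ψ) ∈ ℝ^{d₁} × ℝ^{d₂}`, the prior mass of
`{(α,θ₁,ψ) : ‖θ₁−θ₁*‖ ≤ δ, (1−α)‖ψ‖ ≤ δ, 1−α > z}` is bounded, up to a
constant, by `δ^{d₁+d₂} z^{a₂−d₂}`. -/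
theorem stmt_17 (d₁ d₂ : ℕ) (hd₂ : 0 < d₂) (a₁ a₂ : ℝ)
    (ha₁ : 0 < a₁) (ha₂ : 0 < a₂) (ha₂d : a₂ < d₂)
    (θstar : EuclideanSpace ℝ (Fin d₁))
    (p : EuclideanSpace ℝ (Fin d₁) × EuclideanSpace ℝ (Fin d₂) → ℝ)
    (B : ℝ) (hp0 : ∀ x, 0 ≤ p x) (hpB : ∀ x, p x ≤ B) :
    ∃ C : ℝ, 0 < C ∧ ∀ δ z : ℝ, 0 < δ → δ ≤ z → z < 1 →
      (∫ q in {q : ℝ × (EuclideanSpace ℝ (Fin d₁) × EuclideanSpace ℝ (Fin d₂)) |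
            q.1 ∈ Ioo (0:ℝ) 1 ∧ ‖q.2.1 - θstar‖ ≤ δ ∧
            (1 - q.1) * ‖q.2.2‖ ≤ δ ∧ z < 1 - q.1},
          q.1 ^ (a₁ - 1) * (1 - q.1) ^ (a₂ - 1) * p q.2)
        ≤ C * δ ^ ((d₁ : ℝ) + d₂) * z ^ (a₂ - d₂) / (d₂ - a₂) := by

  have hB : 0 ≤ B := le_trans (hp0 (0, 0)) (hpB (0, 0))
  set k₁ : ℝ≥0∞ := volume (Metric.closedBall (0 : EuclideanSpace ℝ (Fin d₁)) 1) with hk₁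
  set k₂ : ℝ≥0∞ := volume (Metric.closedBall (0 : EuclideanSpace ℝ (Fin d₂)) 1) with hk₂
  have hk₁top : k₁ ≠ ⊤ := measure_closedBall_lt_top.ne
  have hk₂top : k₂ ≠ ⊤ := measure_closedBall_lt_top.ne
  set M : ℝ := (1/2:ℝ) ^ (a₂-1-(d₂:ℝ)) * ((1/2:ℝ) ^ a₁ / a₁) * ((d₂:ℝ) - a₂)
      + max ((1/2:ℝ) ^ (a₁-1)) 1 with hM
  have hMpos : 0 < M := by
    have h1 : (0:ℝ) < (1/2:ℝ) ^ (a₂-1-(d₂:ℝ)) := Real.rpow_pos_of_pos (by norm_num) _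
    have h2 : (0:ℝ) < (1/2:ℝ) ^ a₁ / a₁ := by positivity
    have h3 : (0:ℝ) < max ((1/2:ℝ) ^ (a₁-1)) 1 := lt_max_of_lt_right one_pos
    have hda : (0:ℝ) < (d₂:ℝ) - a₂ := by linarith
    positivity
  refine ⟨B * k₁.toReal * k₂.toReal * M + 1, by positivity, ?_⟩
  intro δ z hδ hδz hz1
  have hz : 0 < z := lt_of_lt_of_le hδ hδz
  have hda : (0:ℝ) < (d₂:ℝ) - a₂ := by linarith
  set S : Set (ℝ × (EuclideanSpace ℝ (Fin d₁) × EuclideanSpace ℝ (Fin d₂))) := {q | q.1 ∈ Ioo (0:ℝ) 1 ∧ ‖q.2.1 - θstar‖ ≤ δ ∧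
      (1 - q.1) * ‖q.2.2‖ ≤ δ ∧ z < 1 - q.1} with hSdef
  set f : ℝ × (EuclideanSpace ℝ (Fin d₁) × EuclideanSpace ℝ (Fin d₂)) → ℝ := fun q => q.1 ^ (a₁ - 1) * (1 - q.1) ^ (a₂ - 1) * p q.2 with hfdef
  set T : Set (ℝ × (EuclideanSpace ℝ (Fin d₁) × EuclideanSpace ℝ (Fin d₂))) := {q | ‖q.2.1 - θstar‖ ≤ δ ∧ (1 - q.1) * ‖q.2.2‖ ≤ δ} with hTdef
  have hT : MeasurableSet T := by
    have : IsClosed T := by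
      apply IsClosed.inter
      · exact isClosed_le ((continuous_snd.fst.sub continuous_const).norm) continuous_const
      · exact isClosed_le ((continuous_const.sub continuous_fst).mul continuous_snd.snd.norm)
          continuous_const
    exact this.measurableSet
  have hS : MeasurableSet S := by
    have h1 : MeasurableSet {q : ℝ × (EuclideanSpace ℝ (Fin d₁) × EuclideanSpace ℝ (Fin d₂)) | q.1 ∈ Ioo (0:ℝ) 1} :=
      measurable_fst measurableSet_Ioo
    have h2 : MeasurableSet {q : ℝ × (EuclideanSpace ℝ (Fin d₁) × EuclideanSpace ℝ (Fin d₂)) | z < 1 - q.1} :=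
      measurableSet_lt measurable_const (measurable_const.sub measurable_fst)
    have : S = ({q : ℝ × (EuclideanSpace ℝ (Fin d₁) × EuclideanSpace ℝ (Fin d₂)) | q.1 ∈ Ioo (0:ℝ) 1} ∩ T) ∩
        {q : ℝ × (EuclideanSpace ℝ (Fin d₁) × EuclideanSpace ℝ (Fin d₂)) | z < 1 - q.1} := by
      ext q; simp only [hSdef, hTdef, mem_setOf_eq, mem_inter_iff]; tauto
    rw [this]
    exact (h1.inter hT).inter h2
  set I : ℝ → ℝ≥0∞ := fun α => (Ioo (0:ℝ) (1-z)).indicator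
      (fun α => ENNReal.ofReal (α ^ (a₁-1) * (1-α) ^ (a₂-1))) α with hIdef
  have hImeas : Measurable I := by
    apply Measurable.indicator ?_ measurableSet_Ioo
    fun_prop
  have hItop : ∀ α, I α ≠ ⊤ := by
    intro α
    rw [hIdef]
    simp only [indicator_apply]
    split_ifs <;> simp
  set G : ℝ × (EuclideanSpace ℝ (Fin d₁) × EuclideanSpace ℝ (Fin d₂)) → ℝ≥0∞ := fun q => ENNReal.ofReal B * I q.1 * T.indicator 1 q with hGdef
  have hGmeas : Measurable G :=
    ((measurable_const.mul (hImeas.comp measurable_fst)).mul (measurable_one.indicator hT))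
  -- step A
  have hA : (∫ q in S, f q) ≤ (∫⁻ q in S, ENNReal.ofReal ‖f q‖).toReal := by
    refine le_trans ?_ (norm_integral_le_lintegral_norm f)
    rw [Real.norm_eq_abs]
    exact le_abs_self _
  -- step B : pointwise bound by G
  have hB2 : (∫⁻ q in S, ENNReal.ofReal ‖f q‖) ≤ ∫⁻ q, G q := by
    rw [← lintegral_indicator hS]
    apply lintegral_mono
    intro q
    by_cases hq : q ∈ S
    · rw [indicator_of_mem hq]
      obtain ⟨hα, hθ, hψ, hzα⟩ := hq
      have h01 : 0 < q.1 := hα.1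
      have hu : 0 < 1 - q.1 := lt_trans hz hzα
      have hα' : q.1 ∈ Ioo (0:ℝ) (1-z) := ⟨h01, by linarith⟩
      have hqT : q ∈ T := ⟨hθ, hψ⟩
      rw [hGdef]
      simp only [hIdef]
      rw [indicator_of_mem hα', indicator_of_mem hqT, Pi.one_apply, mul_one,
        ← ENNReal.ofReal_mul hB]
      apply ENNReal.ofReal_le_ofReal
      have ha : (0:ℝ) ≤ q.1 ^ (a₁-1) := Real.rpow_nonneg h01.le _
      have hb : (0:ℝ) ≤ (1 - q.1) ^ (a₂-1) := Real.rpow_nonneg hu.le _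
      have hab : (0:ℝ) ≤ q.1 ^ (a₁-1) * (1 - q.1) ^ (a₂-1) := mul_nonneg ha hb
      rw [hfdef, Real.norm_eq_abs, abs_of_nonneg (mul_nonneg hab (hp0 _))]
      nlinarith [mul_le_mul_of_nonneg_left (hpB q.2) hab]
    · rw [indicator_of_notMem hq]
      exact zero_le'
  -- section volumes
  have hsect : ∀ α : ℝ, α ∈ Ioo (0:ℝ) (1-z) → volume (Prod.mk α ⁻¹' T)
      = ENNReal.ofReal (δ^d₁) * k₁ * (ENNReal.ofReal ((δ/(1-α))^d₂) * k₂) := by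
    intro α hα
    have hu : 0 < 1 - α := by have := hα.2; linarith
    have hpre : Prod.mk α ⁻¹' T = Metric.closedBall θstar δ ×ˢ
        Metric.closedBall (0 : EuclideanSpace ℝ (Fin d₂)) (δ/(1-α)) := by
      ext x
      simp only [hTdef, mem_preimage, mem_setOf_eq, Set.mem_prod, Metric.mem_closedBall,
        dist_eq_norm, sub_zero]
      apply and_congr Iff.rfl
      rw [le_div_iff₀ hu, mul_comm]
    rw [hpre, Measure.volume_eq_prod, Measure.prod_prod,
      Measure.addHaar_closedBall' volume θstar hδ.le,
      Measure.addHaar_closedBall' volume (0 : EuclideanSpace ℝ (Fin d₂))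
        (r := δ/(1-α)) (by positivity),
      finrank_euclideanSpace_fin, finrank_euclideanSpace_fin]
  -- step C
  set X : ℝ := M * (z ^ (a₂ - (d₂:ℝ)) / ((d₂:ℝ) - a₂)) with hXdef
  have hXnn : 0 ≤ X := by
    have := Real.rpow_nonneg hz.le (a₂ - (d₂:ℝ))
    positivity
  set L : ℝ≥0∞ := ENNReal.ofReal B * (ENNReal.ofReal (δ^d₁) * k₁ * k₂ *
      ENNReal.ofReal (δ^d₂ * X)) with hLdef
  have hC : (∫⁻ q, G q) ≤ L := by
    rw [Measure.volume_eq_prod, lintegral_prod _ hGmeas.aemeasurable]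
    have inner : ∀ α : ℝ, (∫⁻ x, G (α, x)) = ENNReal.ofReal B *
        (I α * volume (Prod.mk α ⁻¹' T)) := by
      intro α
      have hgx : ∀ x, G (α, x) = (ENNReal.ofReal B * I α) *
          (Prod.mk α ⁻¹' T).indicator 1 x := fun x => rfl
      simp_rw [hgx]
      rw [lintegral_const_mul' _ _ (ENNReal.mul_ne_top ENNReal.ofReal_ne_top (hItop α)),
        lintegral_indicator_one (measurable_prodMk_left hT), mul_assoc]
    calc (∫⁻ α, ∫⁻ x, G (α, x))
        = ∫⁻ α, ENNReal.ofReal B * (I α * volume (Prod.mk α ⁻¹' T)) := lintegral_congr inner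
      _ = ENNReal.ofReal B * ∫⁻ α, I α * volume (Prod.mk α ⁻¹' T) :=
          lintegral_const_mul' _ _ ENNReal.ofReal_ne_top
      _ = ENNReal.ofReal B * ∫⁻ α, (Ioo (0:ℝ) (1-z)).indicator
            (fun α => ENNReal.ofReal (α ^ (a₁-1) * (1-α) ^ (a₂-1)) *
              volume (Prod.mk α ⁻¹' T)) α := by
          congr 1
          apply lintegral_congr
          intro α
          simp only [hIdef]
          by_cases hα : α ∈ Ioo (0:ℝ) (1-z)
          · rw [indicator_of_mem hα, indicator_of_mem hα]
          · rw [indicator_of_notMem hα, indicator_of_notMem hα, zero_mul]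
      _ = ENNReal.ofReal B * ∫⁻ α in Ioo (0:ℝ) (1-z),
            ENNReal.ofReal (α ^ (a₁-1) * (1-α) ^ (a₂-1)) * volume (Prod.mk α ⁻¹' T) := by
          rw [lintegral_indicator measurableSet_Ioo]
      _ = ENNReal.ofReal B * ∫⁻ α in Ioo (0:ℝ) (1-z),
            (ENNReal.ofReal (δ^d₁) * k₁ * k₂) *
              ENNReal.ofReal (α ^ (a₁-1) * (1-α) ^ (a₂-1) * (δ/(1-α))^d₂) := by
          congr 1
          apply setLIntegral_congr_fun measurableSet_Ioo
          intro α hα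
          beta_reduce
          rw [hsect α hα]
          have hu : 0 < 1 - α := by have := hα.2; linarith
          have h0 : 0 < α := hα.1
          have hab : (0:ℝ) ≤ α ^ (a₁-1) * (1-α) ^ (a₂-1) :=
            mul_nonneg (Real.rpow_nonneg h0.le _) (Real.rpow_nonneg hu.le _)
          rw [ENNReal.ofReal_mul hab]
          ring
      _ = ENNReal.ofReal B * ((ENNReal.ofReal (δ^d₁) * k₁ * k₂) *
            ∫⁻ α in Ioo (0:ℝ) (1-z),
              ENNReal.ofReal (α ^ (a₁-1) * (1-α) ^ (a₂-1) * (δ/(1-α))^d₂)) := by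
          rw [lintegral_const_mul' _ _
            (ENNReal.mul_ne_top (ENNReal.mul_ne_top ENNReal.ofReal_ne_top hk₁top) hk₂top)]
      _ ≤ L := by
          rw [hLdef, hXdef]
          gcongr
          exact aux_alpha d₂ a₁ a₂ δ z ha₁ ha₂ ha₂d hδ hz hz1
  have hLtop : L ≠ ⊤ := by
    rw [hLdef]
    exact ENNReal.mul_ne_top ENNReal.ofReal_ne_top
      (ENNReal.mul_ne_top
        (ENNReal.mul_ne_top (ENNReal.mul_ne_top ENNReal.ofReal_ne_top hk₁top) hk₂top)
        ENNReal.ofReal_ne_top)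
  -- conclusion
  calc (∫ q in S, f q) ≤ (∫⁻ q in S, ENNReal.ofReal ‖f q‖).toReal := hA
    _ ≤ L.toReal := ENNReal.toReal_mono hLtop (hB2.trans hC)
    _ = B * (δ^d₁ * k₁.toReal * k₂.toReal * (δ^d₂ * X)) := by
        rw [hLdef, ENNReal.toReal_mul, ENNReal.toReal_mul, ENNReal.toReal_mul,
          ENNReal.toReal_mul, ENNReal.toReal_ofReal hB,
          ENNReal.toReal_ofReal (by positivity : (0:ℝ) ≤ δ^d₁),
          ENNReal.toReal_ofReal (by positivity : (0:ℝ) ≤ δ^d₂ * X)]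
    _ ≤ (B * k₁.toReal * k₂.toReal * M + 1) * δ ^ ((d₁:ℝ) + d₂) * z ^ (a₂ - d₂) / (↑d₂ - a₂) := by
        have hrw : δ ^ ((d₁:ℝ) + (d₂:ℝ)) = δ ^ d₁ * δ ^ d₂ := by
          rw [show ((d₁:ℝ) + (d₂:ℝ)) = ((d₁ + d₂ : ℕ) : ℝ) by push_cast; ring,
            Real.rpow_natCast, pow_add]
        rw [hrw, hXdef]
        have hznn : 0 ≤ z ^ (a₂ - (d₂:ℝ)) := Real.rpow_nonneg hz.le _
        have hk₁nn : 0 ≤ k₁.toReal := ENNReal.toReal_nonneg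
        have hk₂nn : 0 ≤ k₂.toReal := ENNReal.toReal_nonneg
        have heq : B * (δ^d₁ * k₁.toReal * k₂.toReal *
            (δ^d₂ * (M * (z ^ (a₂ - (d₂:ℝ)) / ((d₂:ℝ) - a₂)))))
            = (B * k₁.toReal * k₂.toReal * M) * (δ^d₁ * δ^d₂) * z ^ (a₂ - (d₂:ℝ)) / ((d₂:ℝ) - a₂) := by
          ring
        rw [heq]
        gcongr
        linarith
end

section
/- Identifiability of two-component mixtures of a Poisson and a Geometric with common mean: if α P(λ) + (1−α) Geo(1/(1+λ)) = α' P(λ') + (1−α') Geo(1/(1+λ')) as distributions on ℕ, with α, α' ∈ (0,1) and λ, λ' > 0, then α = α' and λ = λ'. -/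
open Filter

private lemma stmt_19_aux (α α' l l' : ℝ)
    (hα1 : α < 1) (hl : 0 < l) (hl' : 0 < l') (hlt : l' < l)
    (h : ∀ k : ℕ,
      α * (Real.exp (-l) * l ^ k / (Nat.factorial k : ℝ))
        + (1 - α) * (l ^ k / (1 + l) ^ (k + 1))
      = α' * (Real.exp (-l') * l' ^ k / (Nat.factorial k : ℝ))
        + (1 - α') * (l' ^ k / (1 + l') ^ (k + 1))) : False := by
  have h1 : (1+l) ≠ 0 := by positivity
  have h2 : (1+l') ≠ 0 := by positivity
  have hl0 : l ≠ 0 := ne_of_gt hl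
  have hl0' : l' ≠ 0 := ne_of_gt hl'
  set q : ℝ := l' * (1 + l) / (l * (1 + l')) with hq
  have hq0 : 0 ≤ q := by positivity
  have hq1 : q < 1 := by
    rw [hq, div_lt_one (by positivity)]
    nlinarith
  set u : ℕ → ℝ := fun k =>
    α * Real.exp (-l) * ((1+l)^k / (Nat.factorial k : ℝ)) + (1-α)/(1+l) with hu
  set v : ℕ → ℝ := fun k =>
    α' * Real.exp (-l') * ((l'*(1+l)/l)^k / (Nat.factorial k : ℝ))
      + (1-α')/(1+l') * q^k with hv
  have key : u = v := by
    funext k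
    have hk := h k
    have hfk : ((Nat.factorial k : ℝ)) ≠ 0 := Nat.cast_ne_zero.mpr k.factorial_ne_zero
    have T1 : α * (Real.exp (-l) * l ^ k / (Nat.factorial k : ℝ)) * ((1+l)/l)^k
        = α * Real.exp (-l) * ((1+l)^k / (Nat.factorial k : ℝ)) := by
      rw [div_pow]; field_simp
    have T2 : (1-α)*(l^k/(1+l)^(k+1)) * ((1+l)/l)^k = (1-α)/(1+l) := by
      rw [div_pow]; field_simp; ring
    have T3 : α' * (Real.exp (-l') * l'^k / (Nat.factorial k : ℝ)) * ((1+l)/l)^k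
        = α' * Real.exp (-l') * ((l'*(1+l)/l)^k / (Nat.factorial k : ℝ)) := by
      simp only [div_pow, mul_pow]; field_simp
    have T4 : (1-α')*(l'^k/(1+l')^(k+1)) * ((1+l)/l)^k
        = (1-α')/(1+l') * (l'*(1+l)/(l*(1+l')))^k := by
      simp only [div_pow, mul_pow]; field_simp; ring
    show α * Real.exp (-l) * ((1+l)^k / (Nat.factorial k : ℝ)) + (1-α)/(1+l)
        = α' * Real.exp (-l') * ((l'*(1+l)/l)^k / (Nat.factorial k : ℝ))
          + (1-α')/(1+l') * (l'*(1+l)/(l*(1+l')))^k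
    rw [← T1, ← T2, ← T3, ← T4, ← add_mul, hk, add_mul]
  have tu : Tendsto u atTop (nhds ((1-α)/(1+l))) := by
    have := ((FloorSemiring.tendsto_pow_div_factorial_atTop (1+l)).const_mul
      (α * Real.exp (-l))).add_const ((1-α)/(1+l))
    simpa using this
  have tv : Tendsto v atTop (nhds 0) := by
    have t1 := (FloorSemiring.tendsto_pow_div_factorial_atTop (l'*(1+l)/l)).const_mul
      (α' * Real.exp (-l'))
    have t2 := (tendsto_pow_atTop_nhds_zero_of_lt_one hq0 hq1).const_mul ((1-α')/(1+l'))
    have := t1.add t2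
    simpa using this
  rw [key] at tu
  have : (1-α)/(1+l) = 0 := tendsto_nhds_unique tu tv
  have hpos : 0 < (1-α)/(1+l) := div_pos (by linarith) (by linarith)
  linarith

/-- Identifiability of two-component mixtures of a Poisson and a Geometric
distribution with common mean: if
`α P(λ) + (1−α) Geo(1/(1+λ)) = α' P(λ') + (1−α') Geo(1/(1+λ'))` as pmfs on
`ℕ`, with `α, α' ∈ (0,1)` and `λ, λ' > 0`, then `α = α'` and `λ = λ'`. -/
theorem stmt_19 (α α' l l' : ℝ)
    (hα : α ∈ Set.Ioo (0:ℝ) 1) (hα' : α' ∈ Set.Ioo (0:ℝ) 1)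
    (hl : 0 < l) (hl' : 0 < l')
    (h : ∀ k : ℕ,
      α * (Real.exp (-l) * l ^ k / (Nat.factorial k : ℝ))
        + (1 - α) * (l ^ k / (1 + l) ^ (k + 1))
      = α' * (Real.exp (-l') * l' ^ k / (Nat.factorial k : ℝ))
        + (1 - α') * (l' ^ k / (1 + l') ^ (k + 1))) :
    α = α' ∧ l = l' := by
  obtain ⟨hα0, hα1⟩ := hα
  obtain ⟨hα'0, hα'1⟩ := hα'
  have hll : l = l' := by
    rcases lt_trichotomy l' l with hlt | heq | hlt
    · exact absurd (stmt_19_aux α α' l l' hα1 hl hl' hlt h) id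
    · exact heq.symm
    · exact absurd (stmt_19_aux α' α l' l hα'1 hl' hl hlt (fun k => (h k).symm)) id
  subst hll
  refine ⟨?_, rfl⟩
  have h0 := h 0
  have h1 : (1+l) ≠ 0 := by positivity
  norm_num at h0
  have he : 1 + l < Real.exp l := by
    have := Real.add_one_lt_exp (ne_of_gt hl); linarith
  have hexp : Real.exp (-l) < 1/(1+l) := by
    rw [Real.exp_neg, inv_eq_one_div]
    exact one_div_lt_one_div_of_lt (by positivity) he
  have hfac : (α - α') * (Real.exp (-l) - 1/(1+l)) = 0 := by
    field_simp at h0 ⊢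
    linarith
  rcases mul_eq_zero.mp hfac with h' | h'
  · linarith
  · have : Real.exp (-l) - 1/(1+l) < 0 := by linarith
    linarith
end
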